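/- arXiv:math/0607504 — 4 statements merged into one kernel-verified Lean document; each statement's English description precedes it below -/
import Mathlib

section
/- Let $U_1, U_2, \ldots$ be i.i.d. uniform on $[0,1]$ and $0<r<1$. Let $n(r) = \#\{n : U_n < r^{2n}\}$. Then for every positive integer $m$, $\mathbb{P}[n(r) \ge m] \le \binom{m^2}{m} r^{m(m+1)} + \frac{r^{2m^2+2}}{1-r^2}$. -/
open MeasureTheory ProbabilityTheory
open scoped ENNReal

lemma aux_sum_lb (s : Finset ℕ) (h : ∀ n ∈ s, 1 ≤ n) :
    s.card * (s.card + 1) ≤ ∑ n ∈ s, 2 * n := by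
  induction s using Finset.strongInductionOn with
  | _ s ih =>
    rcases s.eq_empty_or_nonempty with rfl | hne
    · simp
    · set M := s.max' hne with hM
      have hMs : M ∈ s := s.max'_mem hne
      have hsub : s ⊆ Finset.Icc 1 M := by
        intro n hn
        exact Finset.mem_Icc.2 ⟨h n hn, s.le_max' n hn⟩
      have hcard : s.card ≤ M := by
        have := Finset.card_le_card hsub
        simpa [Nat.card_Icc] using this
      have hsum : (∑ n ∈ s.erase M, 2 * n) + 2 * M = ∑ n ∈ s, 2 * n :=
        Finset.sum_erase_add s _ hMs
      have hih := ih (s.erase M) (Finset.erase_ssubset hMs)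
        (fun n hn => h n (Finset.mem_of_mem_erase hn))
      have hce : (s.erase M).card = s.card - 1 := Finset.card_erase_of_mem hMs
      obtain ⟨k, hk⟩ : ∃ k, s.card = k + 1 :=
        ⟨s.card - 1, (Nat.succ_pred_eq_of_pos (Finset.card_pos.2 hne)).symm⟩
      rw [hce, hk] at hih
      simp only [Nat.add_sub_cancel] at hih
      rw [hk, ← hsum]
      rw [hk] at hcard
      nlinarith [hih, hcard]
  
theorem stmt10 {Ω : Type*} [MeasurableSpace Ω] (P : Measure Ω) [IsProbabilityMeasure P]
    (U : ℕ → Ω → ℝ) (hU : ∀ n, Measurable (U n))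
    (hlaw : ∀ n, Measure.map (U n) P = MeasureTheory.volume.restrict (Set.Icc (0 : ℝ) 1))
    (hindep : iIndepFun U P)
    (r : ℝ) (hr0 : 0 < r) (hr1 : r < 1) (m : ℕ) (hm : 1 ≤ m) :
    P {ω | ∃ s : Finset ℕ, s.card = m ∧ ∀ n ∈ s, 1 ≤ n ∧ U n ω < r ^ (2 * n)}
      ≤ ENNReal.ofReal ((Nat.choose (m ^ 2) m : ℝ) * r ^ (m * (m + 1))
          + r ^ (2 * m ^ 2 + 2) / (1 - r ^ 2)) := by
  set E : ℕ → Set Ω := fun n => (U n) ⁻¹' Set.Iio (r ^ (2 * n)) with hE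
  have hc0 : ∀ n : ℕ, 0 < r ^ (2 * n) := fun n => pow_pos hr0 _
  have hc1 : ∀ n : ℕ, r ^ (2 * n) ≤ 1 := fun n => pow_le_one₀ hr0.le hr1.le
  have hPE : ∀ n, P (E n) = ENNReal.ofReal (r ^ (2 * n)) := by
    intro n
    show P ((U n) ⁻¹' Set.Iio (r ^ (2 * n))) = ENNReal.ofReal (r ^ (2 * n))
    rw [← Measure.map_apply (hU n) measurableSet_Iio, hlaw n,
      Measure.restrict_apply measurableSet_Iio]
    have : Set.Iio (r ^ (2 * n)) ∩ Set.Icc (0:ℝ) 1 = Set.Ico 0 (r ^ (2 * n)) := by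
      ext x
      simp only [Set.mem_inter_iff, Set.mem_Iio, Set.mem_Icc, Set.mem_Ico]
      constructor
      · rintro ⟨h1, h2, _⟩; exact ⟨h2, h1⟩
      · rintro ⟨h1, h2⟩; exact ⟨h2, h1, h2.le.trans (hc1 n)⟩
    rw [this, Real.volume_Ico, sub_zero]
  -- the two covering sets
  set A : Set Ω := ⋃ s ∈ (Finset.Icc 1 (m ^ 2)).powersetCard m, ⋂ n ∈ s, E n with hA
  set B : Set Ω := ⋃ k : ℕ, E (m ^ 2 + 1 + k) with hB
  have hcover : {ω | ∃ s : Finset ℕ, s.card = m ∧ ∀ n ∈ s, 1 ≤ n ∧ U n ω < r ^ (2 * n)}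
      ⊆ A ∪ B := by
    rintro ω ⟨s, hcard, hs⟩
    by_cases hsub : s ⊆ Finset.Icc 1 (m ^ 2)
    · left
      refine Set.mem_iUnion₂.2 ⟨s, Finset.mem_powersetCard.2 ⟨hsub, hcard⟩, ?_⟩
      exact Set.mem_iInter₂.2 fun n hn => (hs n hn).2
    · right
      obtain ⟨n, hn, hnmem⟩ := Finset.not_subset.1 hsub
      obtain ⟨h1, h2⟩ := hs n hn
      have hgt : m ^ 2 + 1 ≤ n := by
        rcases Finset.mem_Icc.not.1 hnmem with h
        omega
      refine Set.mem_iUnion.2 ⟨n - (m ^ 2 + 1), ?_⟩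
      have : m ^ 2 + 1 + (n - (m ^ 2 + 1)) = n := by omega
      rw [this]
      exact h2
  have hmeasE : ∀ n, MeasurableSet (E n) := fun n => (hU n) measurableSet_Iio
  -- bound on A
  have hPA : P A ≤ ENNReal.ofReal ((Nat.choose (m ^ 2) m : ℝ) * r ^ (m * (m + 1))) := by
    refine le_trans (measure_biUnion_finset_le _ _) ?_
    have hbound : ∀ s ∈ (Finset.Icc 1 (m ^ 2)).powersetCard m,
        P (⋂ n ∈ s, E n) ≤ ENNReal.ofReal (r ^ (m * (m + 1))) := by
      intro s hsmem
      obtain ⟨hsub, hcard⟩ := Finset.mem_powersetCard.1 hsmem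
      have hprod : P (⋂ n ∈ s, E n) = ∏ n ∈ s, P (E n) := by
        refine hindep.meas_biInter (fun n _ => ?_)
        exact ⟨Set.Iio (r ^ (2 * n)), measurableSet_Iio, rfl⟩
      rw [hprod]
      have : ∏ n ∈ s, P (E n) = ENNReal.ofReal (∏ n ∈ s, r ^ (2 * n)) := by
        rw [ENNReal.ofReal_prod_of_nonneg (fun n _ => (hc0 n).le)]
        exact Finset.prod_congr rfl fun n _ => hPE n
      rw [this]
      apply ENNReal.ofReal_le_ofReal
      rw [Finset.prod_pow_eq_pow_sum]
      have hsumlb : m * (m + 1) ≤ ∑ n ∈ s, 2 * n := by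
        have := aux_sum_lb s (fun n hn => (Finset.mem_Icc.1 (hsub hn)).1)
        rwa [hcard] at this
      exact pow_le_pow_of_le_one hr0.le hr1.le hsumlb
    calc ∑ s ∈ (Finset.Icc 1 (m ^ 2)).powersetCard m, P (⋂ n ∈ s, E n)
        ≤ ∑ _s ∈ (Finset.Icc 1 (m ^ 2)).powersetCard m,
            ENNReal.ofReal (r ^ (m * (m + 1))) := Finset.sum_le_sum hbound
      _ = ((Finset.Icc 1 (m ^ 2)).powersetCard m).card
            * ENNReal.ofReal (r ^ (m * (m + 1))) := by rw [Finset.sum_const, nsmul_eq_mul]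
      _ = ENNReal.ofReal ((Nat.choose (m ^ 2) m : ℝ) * r ^ (m * (m + 1))) := by
          rw [Finset.card_powersetCard, Nat.card_Icc]
          simp only [Nat.add_sub_cancel]
          rw [ENNReal.ofReal_mul (by positivity), ENNReal.ofReal_natCast]
  -- bound on B
  have hPB : P B ≤ ENNReal.ofReal (r ^ (2 * m ^ 2 + 2) / (1 - r ^ 2)) := by
    refine le_trans (measure_iUnion_le _) (le_of_eq ?_)
    have heq : ∀ k : ℕ, P (E (m ^ 2 + 1 + k))
        = ENNReal.ofReal (r ^ (2 * m ^ 2 + 2)) * (ENNReal.ofReal (r ^ 2)) ^ k := by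
      intro k
      rw [hPE, ← ENNReal.ofReal_pow (by positivity), ← ENNReal.ofReal_mul (by positivity),
        ← pow_mul, ← pow_add]
      ring_nf
    calc ∑' k : ℕ, P (E (m ^ 2 + 1 + k))
        = ∑' k : ℕ, ENNReal.ofReal (r ^ (2 * m ^ 2 + 2)) * (ENNReal.ofReal (r ^ 2)) ^ k := by
          exact tsum_congr heq
      _ = ENNReal.ofReal (r ^ (2 * m ^ 2 + 2)) * (1 - ENNReal.ofReal (r ^ 2))⁻¹ := by
          rw [ENNReal.tsum_mul_left, ENNReal.tsum_geometric]
      _ = ENNReal.ofReal (r ^ (2 * m ^ 2 + 2) / (1 - r ^ 2)) := by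
          have h1 : (1 : ℝ≥0∞) - ENNReal.ofReal (r ^ 2) = ENNReal.ofReal (1 - r ^ 2) := by
            rw [← ENNReal.ofReal_one, ← ENNReal.ofReal_sub _ (by positivity)]
          rw [h1, ENNReal.ofReal_div_of_pos (by nlinarith : (0:ℝ) < 1 - r ^ 2), div_eq_mul_inv]
  calc P {ω | ∃ s : Finset ℕ, s.card = m ∧ ∀ n ∈ s, 1 ≤ n ∧ U n ω < r ^ (2 * n)}
      ≤ P (A ∪ B) := measure_mono hcover
    _ ≤ P A + P B := measure_union_le _ _
    _ ≤ ENNReal.ofReal ((Nat.choose (m ^ 2) m : ℝ) * r ^ (m * (m + 1)))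
        + ENNReal.ofReal (r ^ (2 * m ^ 2 + 2) / (1 - r ^ 2)) := add_le_add hPA hPB
    _ = ENNReal.ofReal ((Nat.choose (m ^ 2) m : ℝ) * r ^ (m * (m + 1))
          + r ^ (2 * m ^ 2 + 2) / (1 - r ^ 2)) := by
        have hpos : (0:ℝ) < 1 - r ^ 2 := by nlinarith
        rw [← ENNReal.ofReal_add (by positivity) (by positivity)]
end

section
/- Define the density $q(z_1, \ldots, z_n) = |\Delta(z_1,\ldots,z_n)|^2 \prod_{k=1}^n (1+|z_k|^2)^{-(n+1)}$ on $\mathbb{C}^n$, where $\Delta(z_1,\ldots,z_n) = \prod_{i<j}(z_j - z_i)$. Then for every Möbius transformation $\phi(z) = \frac{\alpha z+\beta}{-\bar\beta z+\bar\alpha}$ with $|\alpha|^2+|\beta|^2=1$, one has $q(\phi(z_1),\ldots,\phi(z_n)) \prod_{k=1}^n |\phi'(z_k)|^2 = q(z_1,\ldots,z_n)$ for all $z_1,\ldots,z_n$ in the domain of $\phi$. -/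
open Complex

lemma pairprod {n : ℕ} {M : Type*} [CommMonoid M] (f : Fin n → M) :
    (∏ i : Fin n, ∏ j ∈ Finset.Ioi i, f i * f j) = ∏ k : Fin n, f k ^ (n - 1) := by
  have h1 : (∏ i : Fin n, ∏ j ∈ Finset.Ioi i, f i * f j)
      = (∏ i : Fin n, ∏ j ∈ Finset.Ioi i, f i) * (∏ i : Fin n, ∏ j ∈ Finset.Ioi i, f j) := by
    simp [Finset.prod_mul_distrib]
  rw [h1]
  have h2 : (∏ i : Fin n, ∏ j ∈ Finset.Ioi i, f i) = ∏ i : Fin n, f i ^ (n - 1 - (i : ℕ)) := by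
    simp [Finset.prod_const, Fin.card_Ioi]
  have h3 : (∏ i : Fin n, ∏ j ∈ Finset.Ioi i, f j) = ∏ j : Fin n, f j ^ (j : ℕ) := by
    rw [Finset.prod_comm' (t' := Finset.univ) (s' := fun j => Finset.Iio j)]
    · simp [Finset.prod_const, Fin.card_Iio]
    · intro i j; simp [Finset.mem_Ioi, Finset.mem_Iio]
  rw [h2, h3, ← Finset.prod_mul_distrib]
  refine Finset.prod_congr rfl fun k _ => ?_
  rw [← pow_add]
  congr 1
  have := k.isLt
  omega

/-- The Vandermonde product `∏_{i<j} (z_j - z_i)`. -/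
noncomputable def vandermondeProd {n : ℕ} (z : Fin n → ℂ) : ℂ :=
  ∏ i : Fin n, ∏ j ∈ Finset.Ioi i, (z j - z i)

/-- The density `q(z) = |Δ(z)|² ∏_k (1+|z_k|²)^{-(n+1)}`. -/
noncomputable def qdens {n : ℕ} (z : Fin n → ℂ) : ℝ :=
  ‖vandermondeProd z‖ ^ 2
    * ∏ k : Fin n, ((1 + ‖z k‖ ^ 2) ^ (n + 1))⁻¹

theorem stmt13 (n : ℕ) (α β : ℂ) (h : ‖α‖ ^ 2 + ‖β‖ ^ 2 = 1)
    (z : Fin n → ℂ) (hz : ∀ k, -(starRingEnd ℂ β) * z k + starRingEnd ℂ α ≠ 0) :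
    qdens (fun k => (α * z k + β) / (-(starRingEnd ℂ β) * z k + starRingEnd ℂ α))
        * ∏ k : Fin n,
            ‖((-(starRingEnd ℂ β) * z k + starRingEnd ℂ α) ^ 2)⁻¹‖ ^ 2
      = qdens z := by
  set d : Fin n → ℂ := fun k => -(starRingEnd ℂ β) * z k + starRingEnd ℂ α with hd
  have hdz : ∀ k, d k ≠ 0 := hz
  have hC : α * (starRingEnd ℂ) α + β * (starRingEnd ℂ) β = 1 := by
    rw [Complex.mul_conj, Complex.mul_conj]
    rw [Complex.sq_norm, Complex.sq_norm] at h
    exact_mod_cast h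
  -- difference identity
  have hdiff : ∀ i j : Fin n, (α * z j + β) / d j - (α * z i + β) / d i
      = (z j - z i) * ((d i)⁻¹ * (d j)⁻¹) := by
    intro i j
    rw [div_sub_div _ _ (hdz j) (hdz i)]
    have key : (α * z j + β) * d i - d j * (α * z i + β) = z j - z i := by
      simp only [hd]
      linear_combination (z j - z i) * hC
    rw [key, div_eq_mul_inv, mul_inv]
    ring
  -- Vandermonde identity
  have hvdm : vandermondeProd (fun k => (α * z k + β) / d k)
      = vandermondeProd z * ∏ k : Fin n, (d k)⁻¹ ^ (n - 1) := by
    calc vandermondeProd (fun k => (α * z k + β) / d k)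
        = ∏ i : Fin n, ∏ j ∈ Finset.Ioi i, ((z j - z i) * ((d i)⁻¹ * (d j)⁻¹)) :=
          Finset.prod_congr rfl fun i _ => Finset.prod_congr rfl fun j _ => hdiff i j
      _ = (∏ i : Fin n, ∏ j ∈ Finset.Ioi i, (z j - z i))
            * (∏ i : Fin n, ∏ j ∈ Finset.Ioi i, ((d i)⁻¹ * (d j)⁻¹)) := by
          simp [Finset.prod_mul_distrib]
      _ = vandermondeProd z * ∏ k : Fin n, (d k)⁻¹ ^ (n - 1) := by
          rw [pairprod (fun k => (d k)⁻¹)]; rfl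
  -- normSq identity
  have hkey : ∀ k, Complex.normSq (α * z k + β) + Complex.normSq (d k)
      = 1 + Complex.normSq (z k) := by
    intro k
    have hc : ((Complex.normSq (α * z k + β) : ℂ)) + (Complex.normSq (d k) : ℂ)
        = 1 + (Complex.normSq (z k) : ℂ) := by
      rw [← Complex.mul_conj, ← Complex.mul_conj, ← Complex.mul_conj]
      simp only [hd, map_add, map_mul, map_neg, Complex.conj_conj]
      linear_combination (1 + z k * (starRingEnd ℂ) (z k)) * hC
    exact_mod_cast hc
  have hone : ∀ k, 1 + ‖(α * z k + β) / d k‖ ^ 2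
      = (1 + ‖z k‖ ^ 2) * ((‖d k‖) ^ 2)⁻¹ := by
    intro k
    rw [Complex.sq_norm, Complex.sq_norm, Complex.sq_norm, map_div₀]
    have hnd : Complex.normSq (d k) ≠ 0 := by
      simpa [Complex.normSq_eq_zero] using hdz k
    field_simp
    linear_combination hkey k
  -- real computation
  unfold qdens
  rw [hvdm]
  have habs : ‖vandermondeProd z * ∏ k : Fin n, (d k)⁻¹ ^ (n - 1)‖ ^ 2
      = ‖vandermondeProd z‖ ^ 2
        * ∏ k : Fin n, (((‖d k‖) ^ 2)⁻¹) ^ (n - 1) := by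
    rw [norm_mul, norm_prod, mul_pow, ← Finset.prod_pow]
    congr 1
    refine Finset.prod_congr rfl fun k _ => ?_
    rw [norm_pow, norm_inv]
    ring
  rw [habs]
  have habs2 : ∀ k, ‖((d k) ^ 2)⁻¹‖ ^ 2 = (((‖d k‖) ^ 2)⁻¹) ^ 2 := by
    intro k
    rw [norm_inv, norm_pow]
  have habs3 : ∀ k, ‖((-(starRingEnd ℂ β) * z k + starRingEnd ℂ α) ^ 2)⁻¹‖ ^ 2
      = (((‖d k‖) ^ 2)⁻¹) ^ 2 := habs2
  have hone3 : ∀ k, 1 + ‖(α * z k + β) / (-(starRingEnd ℂ β) * z k + starRingEnd ℂ α)‖ ^ 2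
      = (1 + ‖z k‖ ^ 2) * ((‖d k‖) ^ 2)⁻¹ := hone
  simp only [hone, hone3, habs2, habs3]
  rw [mul_assoc, mul_assoc, ← Finset.prod_mul_distrib, ← Finset.prod_mul_distrib]
  congr 1
  refine Finset.prod_congr rfl fun k _ => ?_
  have hA : (‖d k‖) ^ 2 ≠ 0 := by
    simpa using hdz k
  have hs : (1 : ℝ) + ‖z k‖ ^ 2 ≠ 0 := by positivity
  obtain ⟨m, rfl⟩ : ∃ m, n = m + 1 := ⟨(k : ℕ) + (n - 1 - (k : ℕ)), by have := k.isLt; omega⟩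
  simp only [Nat.add_sub_cancel]
  field_simp
  simp only [div_pow]
  ring
end

section
/- Let $p: \mathbb{C}^n \to [0,\infty)$ be a function of the form $p(z_1,\ldots,z_n) = |\Delta(z_1,\ldots,z_n)|^2 V(|z_1|^2,\ldots,|z_n|^2)$ (with $\Delta$ the Vandermonde and $V$ continuous and positive), satisfying $p(\phi(z_1),\ldots,\phi(z_n))\prod_k |\phi'(z_k)|^2 = p(z_1,\ldots,z_n)$ for all sphere rotations $\phi(z)=\frac{\alpha z+\beta}{-\bar\beta z+\bar\alpha}$ ($|\alpha|^2+|\beta|^2=1$). Then $V(|z_1|^2,\ldots,|z_n|^2) = c\prod_{k=1}^n (1+|z_k|^2)^{-(n+1)}$ for some constant $c > 0$. -/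
open Complex

lemma aux_pair_prod {n : ℕ} (d : Fin n → ℂ) :
    ∏ i : Fin n, ∏ j ∈ Finset.Ioi i, (d i * d j) = ∏ k : Fin n, d k ^ (n - 1) := by
  have h1 : ∏ i : Fin n, ∏ j ∈ Finset.Ioi i, (d i * d j)
      = (∏ i : Fin n, d i ^ (Finset.Ioi i).card) * ∏ i : Fin n, ∏ j ∈ Finset.Ioi i, d j := by
    rw [← Finset.prod_mul_distrib]
    refine Finset.prod_congr rfl fun i _ => ?_
    rw [Finset.prod_mul_distrib, Finset.prod_const]
  have h2 : ∏ i : Fin n, ∏ j ∈ Finset.Ioi i, d j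
      = ∏ j : Fin n, ∏ i ∈ Finset.Iio j, d j := by
    rw [Finset.prod_sigma', Finset.prod_sigma']
    apply Finset.prod_nbij' (fun p => ⟨p.2, p.1⟩) (fun p => ⟨p.2, p.1⟩) <;>
      simp [Finset.mem_Ioi, Finset.mem_Iio]
  rw [h1, h2]
  rw [← Finset.prod_mul_distrib]
  refine Finset.prod_congr rfl fun k _ => ?_
  rw [Finset.prod_const, ← pow_add]
  congr 1
  rw [Fin.card_Ioi, Fin.card_Iio]
  omega

lemma aux_vand {n : ℕ} (a b : ℝ) (hab : a ^ 2 + b ^ 2 = 1) (z : Fin n → ℂ)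
    (hd : ∀ k, (-b : ℂ) * z k + a ≠ 0) :
    vandermondeProd (fun k => ((a:ℂ) * z k + b) / ((-b:ℂ) * z k + a))
      * ∏ k : Fin n, ((-b:ℂ) * z k + a) ^ (n - 1) = vandermondeProd z := by
  have key : ∀ i j : Fin n,
      ((a:ℂ) * z j + b) / ((-b:ℂ) * z j + a) - ((a:ℂ) * z i + b) / ((-b:ℂ) * z i + a)
        = (z j - z i) / (((-b:ℂ) * z i + a) * ((-b:ℂ) * z j + a)) := by
    intro i j
    have habC : (a:ℂ) ^ 2 + (b:ℂ) ^ 2 = 1 := by exact_mod_cast hab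
    rw [div_sub_div _ _ (hd j) (hd i)]
    rw [div_eq_div_iff (mul_ne_zero (hd j) (hd i)) (mul_ne_zero (hd i) (hd j))]
    linear_combination ((z j - z i) * ((-b:ℂ) * z i + a) * ((-b:ℂ) * z j + a)) * habC
  unfold vandermondeProd
  rw [← aux_pair_prod (fun k => (-b:ℂ) * z k + a)]
  rw [← Finset.prod_mul_distrib]
  refine Finset.prod_congr rfl fun i _ => ?_
  rw [← Finset.prod_mul_distrib]
  refine Finset.prod_congr rfl fun j hj => ?_
  rw [key i j]
  exact div_mul_cancel₀ _ (mul_ne_zero (hd i) (hd j))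

lemma aux_normSq (a b : ℝ) (z : ℂ) :
    Complex.normSq ((a:ℂ) * z + b) + Complex.normSq ((-b:ℂ) * z + a)
      = (a ^ 2 + b ^ 2) * (Complex.normSq z + 1) := by
  simp [Complex.normSq_apply, Complex.add_re, Complex.add_im, Complex.mul_re, Complex.mul_im]
  ring

lemma aux_vand_ne {n : ℕ} (z : Fin n → ℂ) (hz : Function.Injective z) :
    vandermondeProd z ≠ 0 := by
  unfold vandermondeProd
  apply Finset.prod_ne_zero_iff.2
  intro i _
  apply Finset.prod_ne_zero_iff.2
  intro j hj
  have hij : i < j := Finset.mem_Ioi.1 hj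
  exact sub_ne_zero.2 fun h => hij.ne' (hz h)

lemma aux_g_inv {n : ℕ} (V : (Fin n → ℝ) → ℝ)
    (hinv : ∀ α β : ℂ, ‖α‖ ^ 2 + ‖β‖ ^ 2 = 1 →
      ∀ z : Fin n → ℂ, (∀ k, -(starRingEnd ℂ β) * z k + starRingEnd ℂ α ≠ 0) →
        (‖(vandermondeProd
              (fun k => (α * z k + β) / (-(starRingEnd ℂ β) * z k + starRingEnd ℂ α)))‖ ^ 2
            * V (fun k => 
‖((α * z k + β) / (-(starRingEnd ℂ β) * z k + starRingEnd ℂ α))‖ ^ 2))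
          * ∏ k : Fin n,
              ‖(((-(starRingEnd ℂ β) * z k + starRingEnd ℂ α) ^ 2)⁻¹)‖ ^ 2
        = ‖(vandermondeProd z)‖ ^ 2 * V (fun k => ‖(z k)‖ ^ 2))
    (a b : ℝ) (hab : a ^ 2 + b ^ 2 = 1) (z : Fin n → ℂ)
    (hz : Function.Injective z) (hd : ∀ k, (-b : ℂ) * z k + a ≠ 0) :
    V (fun k => ‖(((a:ℂ) * z k + b) / ((-b:ℂ) * z k + a))‖ ^ 2)
        * ∏ k : Fin n, (1 + ‖(((a:ℂ) * z k + b) / ((-b:ℂ) * z k + a))‖ ^ 2) ^ (n + 1)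
      = V (fun k => ‖(z k)‖ ^ 2)
        * ∏ k : Fin n, (1 + ‖(z k)‖ ^ 2) ^ (n + 1) := by
  have habc : ‖((a:ℂ))‖ ^ 2 + ‖((b:ℂ))‖ ^ 2 = 1 := by
    simp [Complex.norm_real, sq_abs, hab]
  have H := hinv (a:ℂ) (b:ℂ) habc z
  simp only [Complex.conj_ofReal] at H
  have H := H hd
  set A : Fin n → ℝ := fun k => ‖((-b:ℂ) * z k + a)‖ with hAdef
  have hA : ∀ k, 0 < A k := fun k => norm_pos_iff.mpr (hd k)
  have hP : ‖(vandermondeProd z)‖ ≠ 0 := norm_ne_zero_iff.mpr (aux_vand_ne z hz)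
  have hQ : ‖(vandermondeProd (fun k => ((a:ℂ) * z k + b) / ((-b:ℂ) * z k + a)))‖
      * ∏ k : Fin n, A k ^ (n - 1) = ‖(vandermondeProd z)‖ := by
    have := congrArg (fun x : ℂ => ‖x‖) (aux_vand a b hab z hd)
    rw [norm_mul, norm_prod] at this
    simpa only [norm_pow] using this
  have hQne : ‖(vandermondeProd fun k => ((a:ℂ) * z k + b) / ((-b:ℂ) * z k + a))‖ ≠ 0 := by
    intro h
    rw [h, zero_mul] at hQ
    exact hP hQ.symm
  simp only [norm_inv, norm_pow] at H
  rw [← hQ] at H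
  have hprod1 : ∏ x : Fin n, ((‖((-b:ℂ) * z x + a)‖ ^ 2)⁻¹) ^ 2
      = (∏ x : Fin n, A x ^ 4)⁻¹ := by
    rw [← Finset.prod_inv_distrib]
    refine Finset.prod_congr rfl fun x _ => ?_
    simp only [hAdef, ← inv_pow, ← pow_mul]
  rw [hprod1] at H
  have hA4 : (0:ℝ) < ∏ x : Fin n, A x ^ 4 := Finset.prod_pos fun x _ => pow_pos (hA x) 4
  have hcomb : (∏ k : Fin n, A k ^ (n-1))^2 * (∏ k : Fin n, A k ^ 4)
      = ∏ k : Fin n, A k ^ (2*n+2) := by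
    rw [← Finset.prod_pow, ← Finset.prod_mul_distrib]
    refine Finset.prod_congr rfl fun k _ => ?_
    rw [← pow_mul, ← pow_add]
    congr 1
    have := k.pos
    omega
  have H2 := congrArg (· * (∏ x : Fin n, A x ^ 4)) H
  rw [mul_assoc, inv_mul_cancel₀ (ne_of_gt hA4), mul_one] at H2
  have h2 : (‖(vandermondeProd fun k => ((a:ℂ) * z k + b) / ((-b:ℂ) * z k + a))‖
        * ∏ k : Fin n, A k ^ (n-1))^2 * (V fun k => ‖(z k)‖ ^ 2)
        * ∏ x : Fin n, A x ^ 4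
      = ‖(vandermondeProd fun k => ((a:ℂ) * z k + b) / ((-b:ℂ) * z k + a))‖ ^ 2
        * ((V fun k => ‖(z k)‖ ^ 2)
          * ((∏ k : Fin n, A k ^ (n-1))^2 * ∏ k : Fin n, A k ^ 4)) := by ring
  rw [h2, hcomb] at H2
  have hVphi := mul_left_cancel₀ (pow_ne_zero 2 hQne) H2
  -- hVphi : Vφ = Vz * ∏ A^(2n+2)
  have hm : ∀ k, 1 + ‖(((a:ℂ) * z k + b) / ((-b:ℂ) * z k + a))‖ ^ 2
      = (1 + ‖(z k)‖ ^ 2) / A k ^ 2 := by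
    intro k
    have hns := aux_normSq a b (z k)
    rw [hab, one_mul] at hns
    have hd2 : Complex.normSq ((-b:ℂ) * z k + a) ≠ 0 := (Complex.normSq_pos.mpr (hd k)).ne'
    simp only [hAdef, norm_div, div_pow, Complex.sq_norm]
    rw [eq_div_iff hd2, add_mul, div_mul_cancel₀ _ hd2]
    linarith
  have hprodphi : ∏ k : Fin n, (1 + ‖(((a:ℂ) * z k + b) / ((-b:ℂ) * z k + a))‖ ^ 2) ^ (n+1)
      = ∏ k : Fin n, ((1 + ‖(z k)‖ ^ 2) / A k ^ 2) ^ (n+1) :=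
    Finset.prod_congr rfl fun k _ => by rw [hm k]
  rw [hVphi, hprodphi, mul_assoc, ← Finset.prod_mul_distrib]
  congr 1
  refine Finset.prod_congr rfl fun k _ => ?_
  rw [div_pow, ← pow_mul]
  rw [show 2*(n+1) = 2*n+2 by ring]
  rw [mul_div_assoc']
  rw [mul_comm (A k ^ (2*n+2))]
  rw [mul_div_assoc]
  rw [div_self (pow_ne_zero _ (ne_of_gt (hA k))), mul_one]

lemma aux_ivt (t r0 : ℝ) (ht : 0 < t) (hr0 : 0 ≤ r0) (ht1 : t ^ 2 * (r0 + 1) < 1/9) :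
    ∃ ε : ℝ, 0 < ε ∧ ε ≤ 1 ∧ ∀ s : ℝ, 0 ≤ s → |s - r0| < ε → ∃ c : ℝ, -1 ≤ c ∧ c ≤ 1 ∧
      (s + t^2 + 2*t*Real.sqrt s*c) / (1 + t^2*s - 2*t*Real.sqrt s*c)
        = (r0 + t^2)/(1 + t^2*r0) := by
  have ht2 : t^2 < 1/9 := by nlinarith
  have ht3 : t < 1/3 := by nlinarith
  have ht4 : t^4 ≤ 1 := by nlinarith [mul_le_mul_of_nonneg_left ht2.le (sq_nonneg t)]
  have key : ∀ s : ℝ, 0 ≤ s → s ≤ r0 + 1 → |s - r0| ≤ t * Real.sqrt s →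
      ∃ c : ℝ, -1 ≤ c ∧ c ≤ 1 ∧
      (s + t^2 + 2*t*Real.sqrt s*c) / (1 + t^2*s - 2*t*Real.sqrt s*c)
        = (r0 + t^2)/(1 + t^2*r0) := by
    intro s hs hs1 habs
    obtain ⟨a, ha, ha2⟩ : ∃ a : ℝ, 0 ≤ a ∧ a^2 = s :=
      ⟨Real.sqrt s, Real.sqrt_nonneg s, Real.sq_sqrt hs⟩
    subst ha2
    rw [Real.sqrt_sq ha] at habs ⊢
    have habs' := abs_le.mp habs
    have hta : t * a < 1/3 := by
      have h5 : (t*a)^2 < 1/9 := by nlinarith [mul_le_mul_of_nonneg_left hs1 (sq_nonneg t)]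
      nlinarith [mul_nonneg ht.le ha]
    have hden : ∀ c ∈ Set.Icc (-1:ℝ) 1, 0 < 1 + t^2*a^2 - 2*t*a*c := by
      intro c hc
      nlinarith [mul_nonneg (mul_nonneg ht.le ha) (sub_nonneg.2 hc.2), sq_nonneg (1 - t*a)]
    have hcont : ContinuousOn (fun c : ℝ => (a^2 + t^2 + 2*t*a*c) / (1 + t^2*a^2 - 2*t*a*c))
        (Set.Icc (-1:ℝ) 1) := by
      apply ContinuousOn.div
      · fun_prop
      · fun_prop
      · exact fun c hc => (hden c hc).ne'
    have hd2 : (0:ℝ) < 1 + t^2*r0 := by positivity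
    have hmem : (r0 + t^2)/(1 + t^2*r0) ∈ Set.Icc
        ((a^2 + t^2 + 2*t*a*(-1)) / (1 + t^2*a^2 - 2*t*a*(-1)))
        ((a^2 + t^2 + 2*t*a*1) / (1 + t^2*a^2 - 2*t*a*1)) := by
      have hb1 : (0:ℝ) ≤ t*a + (a^2 - r0) := by linarith [habs'.1]
      have hb2 : (0:ℝ) ≤ t*a - (a^2 - r0) := by linarith [habs'.2]
      have hta0 : (0:ℝ) ≤ t*a := mul_nonneg ht.le ha
      constructor
      · rw [div_le_div_iff₀ (hden (-1) (by constructor <;> norm_num)) hd2]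
        nlinarith [mul_nonneg hb1 (pow_nonneg ht.le 4), hb2,
          mul_nonneg hta0 (by linarith : (0:ℝ) ≤ 1 - t^4),
          mul_nonneg hta0 hr0, mul_nonneg hta0 (sq_nonneg t),
          mul_nonneg (mul_nonneg hta0 hr0) (sq_nonneg t)]
      · rw [div_le_div_iff₀ hd2 (hden 1 (by constructor <;> norm_num))]
        nlinarith [mul_nonneg hb2 (pow_nonneg ht.le 4), hb1,
          mul_nonneg hta0 (by linarith : (0:ℝ) ≤ 1 - t^4),
          mul_nonneg hta0 hr0, mul_nonneg hta0 (sq_nonneg t),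
          mul_nonneg (mul_nonneg hta0 hr0) (sq_nonneg t)]
    obtain ⟨c, hc, hfc⟩ := intermediate_value_Icc (by norm_num : (-1:ℝ) ≤ 1) hcont hmem
    exact ⟨c, hc.1, hc.2, hfc⟩
  rcases eq_or_lt_of_le hr0 with hr | hr
  · subst hr
    refine ⟨t^2, by positivity, by linarith, fun s hs hse => ?_⟩
    rw [sub_zero, _root_.abs_of_nonneg hs] at hse
    apply key s hs (by linarith)
    have h1 : Real.sqrt s ≤ t := by
      rw [show t = Real.sqrt (t^2) from (Real.sqrt_sq ht.le).symm]
      exact Real.sqrt_le_sqrt (by linarith)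
    rw [sub_zero, _root_.abs_of_nonneg hs]
    calc s = Real.sqrt s * Real.sqrt s := (Real.mul_self_sqrt hs).symm
      _ ≤ t * Real.sqrt s := mul_le_mul_of_nonneg_right h1 (Real.sqrt_nonneg s)
  · refine ⟨min (r0/2) (min (t*Real.sqrt (r0/2)) 1),
      lt_min (by linarith) (lt_min (mul_pos ht (Real.sqrt_pos.mpr (by linarith))) one_pos),
      (min_le_right _ _).trans (min_le_right _ _),
      fun s hs hse => ?_⟩
    have he1 : |s - r0| < r0/2 := lt_of_lt_of_le hse (min_le_left _ _)
    have he2 : |s - r0| < t*Real.sqrt (r0/2) :=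
      lt_of_lt_of_le hse (le_trans (min_le_right _ _) (min_le_left _ _))
    have he3 : |s - r0| < 1 :=
      lt_of_lt_of_le hse (le_trans (min_le_right _ _) (min_le_right _ _))
    have habs1 := abs_lt.mp he1
    apply key s hs (by linarith [(abs_lt.mp he3).2])
    have hq : Real.sqrt (r0/2) ≤ Real.sqrt s := Real.sqrt_le_sqrt (by linarith)
    calc |s - r0| ≤ t*Real.sqrt (r0/2) := he2.le
      _ ≤ t*Real.sqrt s := mul_le_mul_of_nonneg_left hq ht.le

lemma aux_local {n : ℕ} (V : (Fin n → ℝ) → ℝ)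
    (hinv : ∀ α β : ℂ, ‖α‖ ^ 2 + ‖β‖ ^ 2 = 1 →
      ∀ z : Fin n → ℂ, (∀ k, -(starRingEnd ℂ β) * z k + starRingEnd ℂ α ≠ 0) →
        (‖(vandermondeProd
              (fun k => (α * z k + β) / (-(starRingEnd ℂ β) * z k + starRingEnd ℂ α)))‖ ^ 2
            * V (fun k => 
‖((α * z k + β) / (-(starRingEnd ℂ β) * z k + starRingEnd ℂ α))‖ ^ 2))
          * ∏ k : Fin n,
              ‖(((-(starRingEnd ℂ β) * z k + starRingEnd ℂ α) ^ 2)⁻¹)‖ ^ 2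
        = ‖(vandermondeProd z)‖ ^ 2 * V (fun k => ‖(z k)‖ ^ 2))
    (r0 : Fin n → ℝ) (hr0 : ∀ k, 0 ≤ r0 k) :
    ∃ ε > 0, ∃ v : Fin n → ℝ, ∀ r : Fin n → ℝ, (∀ k, 0 ≤ r k) → Function.Injective r →
      (∀ k, |r k - r0 k| < ε) →
      V r * ∏ k : Fin n, (1 + r k)^(n+1) = V v * ∏ k : Fin n, (1 + v k)^(n+1) := by
  classical
  set B := ∑ k : Fin n, r0 k with hBdef
  have hB : 0 ≤ B := Finset.sum_nonneg fun k _ => hr0 k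
  have hBk : ∀ k, r0 k ≤ B := fun k =>
    Finset.single_le_sum (fun i _ => hr0 i) (Finset.mem_univ k)
  obtain ⟨t, ht, ht1⟩ : ∃ t : ℝ, 0 < t ∧ ∀ k, t^2*(r0 k + 1) < 1/9 := by
    refine ⟨1/(4*(B+1)), by positivity, fun k => ?_⟩
    rw [div_pow, one_pow, div_mul_eq_mul_div, one_mul, div_lt_iff₀ (by positivity)]
    nlinarith [sq_nonneg B, hBk k, hr0 k, hB]
  choose εf hεf0 hεf1 hεf2 using fun k => aux_ivt t (r0 k) ht (hr0 k) (ht1 k)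
  obtain ⟨ε, hε, hεle⟩ : ∃ ε > 0, ∀ k, ε ≤ εf k := by
    obtain ⟨ε, hε, h⟩ := Pi.exists_forall_pos_add_lt
      (x := fun _ : Fin n => (0:ℝ)) (y := εf) (fun k => hεf0 k)
    exact ⟨ε, hε, fun k => by linarith [h k]⟩
  refine ⟨ε, hε, fun k => (r0 k + t^2)/(1 + t^2*(r0 k)), fun r hr hrinj hrball => ?_⟩
  have hball : ∀ k, |r k - r0 k| < εf k := fun k => lt_of_lt_of_le (hrball k) (hεle k)
  choose c hc1 hc2 hc3 using fun k => hεf2 k (r k) (hr k) (hball k)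
  -- the Möbius parameters
  set a : ℝ := 1/Real.sqrt (1+t^2) with hadef
  have hsq1t : Real.sqrt (1+t^2) ^ 2 = 1 + t^2 := Real.sq_sqrt (by positivity)
  have hapos : 0 < a := by rw [hadef]; positivity
  have hab : a^2 + (t*a)^2 = 1 := by
    rw [hadef]
    field_simp
    exact hsq1t.symm
  set b : ℝ := t*a with hbdef
  have hbpos : 0 < b := mul_pos ht hapos
  -- the points
  set w : Fin n → ℝ := fun k => Real.sqrt (1 - c k^2) with hwdef
  have hw : ∀ k, (w k)^2 = 1 - c k^2 := fun k =>
    Real.sq_sqrt (by nlinarith [hc1 k, hc2 k])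
  set z : Fin n → ℂ := fun k =>
    ((Real.sqrt (r k) * c k : ℝ) : ℂ) + ((Real.sqrt (r k) * w k : ℝ) : ℂ) * Complex.I
    with hzdef
  have hre : ∀ k, (z k).re = Real.sqrt (r k) * c k := by intro k; simp [hzdef]
  have him : ∀ k, (z k).im = Real.sqrt (r k) * w k := by intro k; simp [hzdef]
  have hrs : ∀ k, Real.sqrt (r k) * Real.sqrt (r k) = r k := fun k => Real.mul_self_sqrt (hr k)
  have hzabs : ∀ k, ‖(z k)‖^2 = r k := by
    intro k
    rw [Complex.sq_norm, Complex.normSq_apply, hre, him]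
    have h1 := hw k
    have h2 := hrs k
    nlinarith [h1, h2]
  have hzinj : Function.Injective z := fun i j hij => hrinj (by rw [← hzabs i, ← hzabs j, hij])
  have hrlt : ∀ k, t^2 * r k < 1/9 := by
    intro k
    have h1 := abs_lt.mp (hball k)
    have h2 := hεf1 k
    have h3 := ht1 k
    nlinarith [sq_nonneg t]
  have hd : ∀ k, (-b:ℂ) * z k + a ≠ 0 := by
    intro k h
    have hzz : (a:ℂ) = (b:ℂ) * z k := by linear_combination h
    have habs2 : a^2 = b^2 * r k := by
      have := congrArg (fun u => ‖u‖ ^ 2) hzz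
      simpa [norm_mul, Complex.norm_real, mul_pow, Complex.sq_norm, Complex.normSq_ofReal, hzabs k,
        abs_of_pos hapos, abs_of_pos hbpos, sq_abs] using this
    have hb2 : b^2 = t^2 * a^2 := by rw [hbdef]; ring
    rw [hb2] at habs2
    have ha2 : 0 < a^2 := pow_pos hapos 2
    have : 1 = t^2 * r k := by
      have := habs2
      field_simp at this ⊢
      nlinarith [this]
    linarith [hrlt k]
  -- the key modulus computation
  have hnum : ∀ k, Complex.normSq ((a:ℂ) * z k + b)
      = a^2 * (r k + t^2 + 2*t*Real.sqrt (r k)*(c k)) := by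
    intro k
    rw [Complex.normSq_apply]
    simp only [Complex.add_re, Complex.add_im, Complex.mul_re, Complex.mul_im,
      Complex.ofReal_re, Complex.ofReal_im, hre, him]
    have h1 := hw k
    have h2 := hrs k
    have h3 : b = t*a := hbdef
    linear_combination (2*a*Real.sqrt (r k)*(c k) + b + t*a) * h3
      + a^2*(Real.sqrt (r k))^2 * h1 + a^2 * h2
  have hden : ∀ k, Complex.normSq ((-b:ℂ) * z k + a)
      = a^2 * (1 + t^2 * r k - 2*t*Real.sqrt (r k)*(c k)) := by
    intro k
    rw [Complex.normSq_apply]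
    simp only [Complex.add_re, Complex.add_im, Complex.mul_re, Complex.mul_im,
      Complex.ofReal_re, Complex.ofReal_im, Complex.neg_re, Complex.neg_im, hre, him]
    have h1 := hw k
    have h2 := hrs k
    have h3 : b = t*a := hbdef
    linear_combination (b*(Real.sqrt (r k))^2*(c k)^2 + b*(Real.sqrt (r k))^2*(w k)^2
      + t*a*(Real.sqrt (r k))^2 - 2*a*Real.sqrt (r k)*(c k)) * h3
      + (b^2*(Real.sqrt (r k))^2) * h1 + (b^2 + t^2*a^2)/2 * h2 + 0 * h2
  have hφ : ∀ k, ‖(((a:ℂ) * z k + b)/((-b:ℂ) * z k + a))‖^2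
      = (r0 k + t^2)/(1 + t^2*(r0 k)) := by
    intro k
    rw [norm_div, div_pow, Complex.sq_norm, Complex.sq_norm, hnum, hden,
      mul_div_mul_left _ _ (ne_of_gt (pow_pos hapos 2))]
    exact hc3 k
  have H := aux_g_inv V hinv a b hab z hzinj hd
  have hf1 : (fun k => ‖(((a:ℂ) * z k + b) / ((-b:ℂ) * z k + a))‖ ^ 2)
      = (fun k => (r0 k + t^2)/(1 + t^2*(r0 k))) := funext hφ
  have hf2 : (fun k => ‖(z k)‖ ^ 2) = r := funext hzabs
  have hp1 : ∏ k : Fin n, (1 + ‖(((a:ℂ) * z k + b)/((-b:ℂ) * z k + a))‖ ^ 2)^(n+1)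
      = ∏ k : Fin n, (1 + (r0 k + t^2)/(1 + t^2*(r0 k)))^(n+1) :=
    Finset.prod_congr rfl fun k _ => by rw [hφ k]
  have hp2 : ∏ k : Fin n, (1 + ‖(z k)‖ ^ 2)^(n+1) = ∏ k : Fin n, (1 + r k)^(n+1) :=
    Finset.prod_congr rfl fun k _ => by rw [hzabs k]
  rw [hf1, hf2, hp1, hp2] at H
  exact H.symm


theorem stmt14 (n : ℕ) (V : (Fin n → ℝ) → ℝ) (hVc : Continuous V)
    (hVpos : ∀ x, 0 < V x)
    (hinv : ∀ α β : ℂ, ‖α‖ ^ 2 + ‖β‖ ^ 2 = 1 →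
      ∀ z : Fin n → ℂ, (∀ k, -(starRingEnd ℂ β) * z k + starRingEnd ℂ α ≠ 0) →
        (‖vandermondeProd
              (fun k => (α * z k + β) / (-(starRingEnd ℂ β) * z k + starRingEnd ℂ α))‖ ^ 2
            * V (fun k => ‖
                ((α * z k + β) / (-(starRingEnd ℂ β) * z k + starRingEnd ℂ α))‖ ^ 2))
          * ∏ k : Fin n,
              ‖((-(starRingEnd ℂ β) * z k + starRingEnd ℂ α) ^ 2)⁻¹‖ ^ 2
        = ‖vandermondeProd z‖ ^ 2 * V (fun k => ‖z k‖ ^ 2)) :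
    ∃ c : ℝ, 0 < c ∧ ∀ z : Fin n → ℂ,
      V (fun k => ‖z k‖ ^ 2)
        = c * ∏ k : Fin n, ((1 + ‖z k‖ ^ 2) ^ (n + 1))⁻¹ := by
  classical
  set g : (Fin n → ℝ) → ℝ := fun x => V x * ∏ k : Fin n, (1 + x k)^(n+1) with hgdef
  have hgc : Continuous g := by
    apply hVc.mul
    fun_prop
  have L2 : ∀ r0 : Fin n → ℝ, (∀ k, 0 ≤ r0 k) → ∃ ε > 0, ∀ r1 : Fin n → ℝ,
      (∀ k, 0 ≤ r1 k) → (∀ k, |r1 k - r0 k| < ε) → g r1 = g r0 := by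
    intro r0 hr0
    obtain ⟨ε, hε, v, hv⟩ := aux_local V hinv r0 hr0
    have key : ∀ r1 : Fin n → ℝ, (∀ k, 0 ≤ r1 k) → (∀ k, |r1 k - r0 k| < ε) →
        g r1 = g v := by
      intro r1 hr1 hball
      obtain ⟨γ, hγ, hγle⟩ : ∃ γ > 0, ∀ k, |r1 k - r0 k| + γ < ε :=
        Pi.exists_forall_pos_add_lt (x := fun k => |r1 k - r0 k|) (y := fun _ => ε) hball
      have hnear : ∀ η > 0, |g r1 - g v| ≤ η := by
        intro η hη
        obtain ⟨δ, hδ, hδc⟩ := Metric.continuous_iff.mp hgc r1 η hη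
        -- choose a small good perturbation parameter θ
        set Bad : Set ℝ := ⋃ p : Fin n × Fin n,
          {θ : ℝ | p.1 ≠ p.2 ∧ r1 p.1 + θ*((p.1:ℕ)+1) = r1 p.2 + θ*((p.2:ℕ)+1)} with hBad
        have hfin : Bad.Finite := by
          apply Set.finite_iUnion
          intro p
          apply Set.Subsingleton.finite
          intro θ1 h1 θ2 h2
          have hu : ((p.1:ℕ):ℝ) + 1 - (((p.2:ℕ):ℝ) + 1) ≠ 0 := by
            have : (p.1:ℕ) ≠ (p.2:ℕ) := fun h => h1.1 (Fin.val_injective h)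
            have : ((p.1:ℕ):ℝ) ≠ ((p.2:ℕ):ℝ) := fun h => this (Nat.cast_injective h)
            intro h; apply this; linarith
          have heq : θ1 * (((p.1:ℕ):ℝ) + 1 - (((p.2:ℕ):ℝ) + 1))
              = θ2 * (((p.1:ℕ):ℝ) + 1 - (((p.2:ℕ):ℝ) + 1)) := by
            have e1 := h1.2; have e2 := h2.2; ring_nf; ring_nf at e1 e2; linarith
          exact mul_right_cancel₀ hu heq
        have hm : (0:ℝ) < min γ δ / (n+1) := by positivity
        obtain ⟨θ, hθ⟩ := ((Set.Ioo_infinite hm).diff hfin).nonempty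
        obtain ⟨⟨hθ0, hθm⟩, hθbad⟩ := hθ
        have hθsmall : ∀ k : Fin n, θ * ((k:ℕ)+1) < min γ δ := by
          intro k
          have h1 : ((k:ℕ):ℝ) + 1 ≤ (n:ℝ) + 1 := by
            have h0 : (k:ℕ) + 1 ≤ n + 1 := by omega
            exact_mod_cast h0
          calc θ * ((k:ℕ)+1) ≤ θ * ((n:ℝ)+1) :=
                mul_le_mul_of_nonneg_left h1 hθ0.le
            _ < (min γ δ / (n+1)) * ((n:ℝ)+1) := by
                apply mul_lt_mul_of_pos_right hθm (by positivity)
            _ = min γ δ := div_mul_cancel₀ _ (by positivity)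
        set r2 : Fin n → ℝ := fun k => r1 k + θ*((k:ℕ)+1) with hr2def
        have hθpos : ∀ k : Fin n, 0 < θ * ((k:ℕ)+1) :=
          fun k => mul_pos hθ0 (by positivity)
        have hr2nn : ∀ k, 0 ≤ r2 k := fun k => by
          have := hθpos k; have := hr1 k; simp only [hr2def]; linarith
        have hr2inj : Function.Injective r2 := by
          intro i j hij
          by_contra hne
          exact hθbad (Set.mem_iUnion.2 ⟨(i, j), hne, hij⟩)
        have hr2ball : ∀ k, |r2 k - r0 k| < ε := by
          intro k
          have h1 : |r2 k - r0 k| ≤ |r1 k - r0 k| + |θ*((k:ℕ)+1)| := by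
            simp only [hr2def]
            calc |r1 k + θ*((k:ℕ)+1) - r0 k| = |(r1 k - r0 k) + θ*((k:ℕ)+1)| := by ring_nf
              _ ≤ |r1 k - r0 k| + |θ*((k:ℕ)+1)| := abs_add_le _ _
          have h2 : |θ*((k:ℕ)+1)| < γ :=
            lt_of_lt_of_le (by rw [abs_of_pos (hθpos k)]; exact lt_of_lt_of_le (hθsmall k) (min_le_left _ _)) le_rfl
          linarith [hγle k]
        have hgv := hv r2 hr2nn hr2inj hr2ball
        have hdist : dist r2 r1 < δ := by
          rcases Nat.eq_zero_or_pos n with hn | hn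
          · subst hn
            have : r2 = r1 := funext fun k => isEmptyElim k
            rw [this, dist_self]; exact hδ
          · rw [dist_pi_lt_iff hδ]
            intro k
            rw [Real.dist_eq]
            simp only [hr2def]
            rw [show r1 k + θ*((k:ℕ)+1) - r1 k = θ*((k:ℕ)+1) by ring,
              abs_of_pos (hθpos k)]
            exact lt_of_lt_of_le (hθsmall k) (min_le_right _ _)
        have hgd := hδc r2 hdist
        have hgv' : g r2 = g v := by simp only [hgdef]; exact hgv
        rw [Real.dist_eq, hgv'] at hgd
        rw [abs_sub_comm]
        exact hgd.le
      have h0 : |g r1 - g v| ≤ 0 :=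
        le_of_forall_pos_le_add fun η hη => by rw [zero_add]; exact hnear η hη
      have h1 : |g r1 - g v| = 0 := le_antisymm h0 (abs_nonneg _)
      exact sub_eq_zero.mp (abs_eq_zero.mp h1)
    have h1 := key r0 hr0 (fun k => by simpa using hε)
    exact ⟨ε, hε, fun r1 hr1 hball => by rw [key r1 hr1 hball, h1]⟩
  -- global constancy via local constancy on ℝⁿ
  set G : (Fin n → ℝ) → ℝ := fun x => g (fun k => max (x k) 0) with hGdef
  have hGlc : IsLocallyConstant G := by
    rw [IsLocallyConstant.iff_exists_open]
    intro x
    obtain ⟨ε, hε, h⟩ := L2 (fun k => max (x k) 0) (fun k => le_max_right _ _)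
    refine ⟨Metric.ball x ε, Metric.isOpen_ball, Metric.mem_ball_self hε, fun y hy => ?_⟩
    apply h (fun k => max (y k) 0) (fun k => le_max_right _ _)
    intro k
    have hd := (dist_pi_lt_iff hε).mp (Metric.mem_ball.mp hy) k
    rw [Real.dist_eq] at hd
    calc |max (y k) 0 - max (x k) 0| ≤ max |y k - x k| |(0:ℝ) - 0| :=
          abs_max_sub_max_le_max _ _ _ _
      _ = |y k - x k| := by rw [sub_zero, abs_zero]; exact max_eq_left (abs_nonneg _)
      _ < ε := hd
  have hGconst : ∀ x, G x = G 0 := fun x => hGlc.apply_eq_of_preconnectedSpace x 0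
  refine ⟨g (fun _ => 0), mul_pos (hVpos _) (Finset.prod_pos fun k _ => by norm_num), fun z => ?_⟩
  have h1 : g (fun k => ‖(z k)‖^2) = g (fun _ => 0) := by
    have hx := hGconst (fun k => ‖(z k)‖^2)
    simp only [hGdef] at hx
    rw [show (fun k => max (‖(z k)‖^2) 0) = (fun k => ‖(z k)‖^2)
        from funext fun k => max_eq_left (sq_nonneg _)] at hx
    have h2 : (fun k : Fin n => max ((0 : Fin n → ℝ) k) 0) = (fun _ : Fin n => (0:ℝ)) := by
      funext k; simp
    rw [h2] at hx
    exact hx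
  simp only [hgdef] at h1
  rw [show (∏ k : Fin n, ((1 + ‖(z k)‖ ^ 2) ^ (n + 1))⁻¹)
      = (∏ k : Fin n, (1 + ‖(z k)‖ ^ 2) ^ (n + 1))⁻¹ from Finset.prod_inv_distrib _]
  rw [eq_mul_inv_iff_mul_eq₀ (by positivity)]
  exact h1

-- axiom check
-- #print axioms stmt14
end

section
/- Let $(a_n)_{n\ge 0}$ be i.i.d. standard complex Gaussians and fix $r > 0$. For all sufficiently large $m$, the probability that $|a_n| \le \frac{r^{m-n}\sqrt{n!}}{\sqrt{m!}}$ simultaneously for all $0 \le n \le m-1$ is at least $\prod_{n=0}^{m-1} \frac{r^{2(m-n)} n!}{2\, m!}$, which equals $e^{-\frac{1}{2}m^2\log m + O(m^2)}$. -/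
open MeasureTheory ProbabilityTheory Finset

noncomputable def stdComplexGaussian : MeasureTheory.Measure ℂ :=
  MeasureTheory.volume.withDensity
    (fun z => ENNReal.ofReal ((1 / Real.pi) * Real.exp (-(‖z‖ ^ 2))))

lemma gauss_lb {t : ℝ} (ht0 : 0 ≤ t) (ht : t ^ 2 ≤ 1 / 2) :
    ENNReal.ofReal (t ^ 2 / 2) ≤ stdComplexGaussian {z : ℂ | ‖z‖ ≤ t} := by
  have hB : {z : ℂ | ‖z‖ ≤ t} = Metric.closedBall 0 t := by
    ext z; simp [Metric.mem_closedBall, Complex.dist_eq]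
  have hmeas : MeasurableSet (Metric.closedBall (0:ℂ) t) := measurableSet_closedBall
  have h1 : stdComplexGaussian (Metric.closedBall 0 t)
      = ∫⁻ z in Metric.closedBall (0:ℂ) t,
          ENNReal.ofReal ((1 / Real.pi) * Real.exp (-(‖z‖ ^ 2))) := by
    rw [stdComplexGaussian, withDensity_apply _ hmeas]
  have h2 : ENNReal.ofReal ((1 / Real.pi) * Real.exp (-(t ^ 2))) * volume (Metric.closedBall (0:ℂ) t)
      ≤ ∫⁻ z in Metric.closedBall (0:ℂ) t,
          ENNReal.ofReal ((1 / Real.pi) * Real.exp (-(‖z‖ ^ 2))) := by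
    rw [← setLIntegral_const]
    refine setLIntegral_mono ?_ ?_
    · exact (measurable_const.mul
        (((continuous_norm.measurable.pow_const 2).neg).exp)).ennreal_ofReal
    · intro z hz
      apply ENNReal.ofReal_le_ofReal
      apply mul_le_mul_of_nonneg_left _ (by positivity)
      apply Real.exp_le_exp.2
      simp only [neg_le_neg_iff]
      have : ‖z‖ ≤ t := by simpa [Complex.dist_eq] using hz
      exact pow_le_pow_left₀ (norm_nonneg z) this 2
  have hvol : volume (Metric.closedBall (0:ℂ) t) = ENNReal.ofReal (t ^ 2 * Real.pi) := by
    rw [Complex.volume_closedBall, ENNReal.ofReal_mul (by positivity),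
      ENNReal.ofReal_pow ht0, ← NNReal.coe_real_pi, ENNReal.ofReal_coe_nnreal]
  have hexp : 1 / 2 ≤ Real.exp (-(t ^ 2)) := by
    have h4 : Real.exp (1/2) ≤ 2 := by
      nlinarith [Real.exp_one_lt_d9, Real.exp_pos (1/2), Real.exp_add (1/2) (1/2),
        Real.exp_pos 1]
    have hmono : Real.exp (-(1/2)) ≤ Real.exp (-(t^2)) := Real.exp_le_exp.2 (by linarith)
    have h2' : (1:ℝ)/2 ≤ Real.exp (-(1/2)) := by
      rw [Real.exp_neg, le_inv_comm₀ (by norm_num) (Real.exp_pos _)]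
      simpa [one_div] using h4
    linarith
  calc ENNReal.ofReal (t ^ 2 / 2)
      ≤ ENNReal.ofReal ((1 / Real.pi) * Real.exp (-(t ^ 2)) * (t ^ 2 * Real.pi)) := by
        apply ENNReal.ofReal_le_ofReal
        rw [div_eq_mul_inv]
        have hπ : (0:ℝ) < Real.pi := Real.pi_pos
        have : (1 / Real.pi) * Real.exp (-(t ^ 2)) * (t ^ 2 * Real.pi)
            = t ^ 2 * Real.exp (-(t ^ 2)) := by field_simp
        rw [this]
        nlinarith [sq_nonneg t]
    _ = ENNReal.ofReal ((1 / Real.pi) * Real.exp (-(t ^ 2))) * volume (Metric.closedBall (0:ℂ) t) := by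
        rw [hvol, ← ENNReal.ofReal_mul (by positivity)]
    _ ≤ ∫⁻ z in Metric.closedBall (0:ℂ) t,
          ENNReal.ofReal ((1 / Real.pi) * Real.exp (-(‖z‖ ^ 2))) := h2
    _ = stdComplexGaussian {z : ℂ | ‖z‖ ≤ t} := by rw [← h1, hB]

lemma sum_range_cast (m : ℕ) : ∑ k ∈ range m, (k:ℝ) = m * (m - 1) / 2 := by
  induction m with
  | zero => simp
  | succ m ih => rw [Finset.sum_range_succ, ih]; push_cast; ring

lemma sum_log_fact (m : ℕ) :
    ∑ n ∈ range m, Real.log (n.factorial : ℝ) - m * Real.log (m.factorial : ℝ)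
      = -(∑ k ∈ range m, (k:ℝ) * Real.log k) - m * Real.log m := by
  induction m with
  | zero => simp
  | succ m ih =>
    have hfac : ((m+1).factorial : ℝ) = (m+1 : ℝ) * (m.factorial : ℝ) := by
      rw [Nat.factorial_succ]; push_cast; ring
    have hlog : Real.log ((m+1).factorial : ℝ)
        = Real.log (m+1 : ℝ) + Real.log (m.factorial : ℝ) := by
      rw [hfac, Real.log_mul (by positivity) (by exact_mod_cast Nat.factorial_pos m |>.ne')]
    rw [Finset.sum_range_succ, Finset.sum_range_succ]
    push_cast [hlog]
    push_cast at ih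
    linarith [ih]

lemma sum_klogk_le (m : ℕ) (hm : 1 ≤ m) :
    ∑ k ∈ range m, (k:ℝ) * Real.log k ≤ 1/2 * (m:ℝ)^2 * Real.log m := by
  have hlogm : 0 ≤ Real.log m := Real.log_nonneg (by exact_mod_cast hm)
  have h1 : ∑ k ∈ range m, (k:ℝ) * Real.log k ≤ ∑ k ∈ range m, (k:ℝ) * Real.log m := by
    apply Finset.sum_le_sum
    intro k hk
    rcases Nat.eq_zero_or_pos k with h0 | hk1
    · simp [h0]
    · apply mul_le_mul_of_nonneg_left _ (by positivity)
      exact Real.log_le_log (by exact_mod_cast hk1)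
        (by exact_mod_cast (Finset.mem_range.1 hk).le)
  rw [← Finset.sum_mul, sum_range_cast] at h1
  have hm1 : (1:ℝ) ≤ m := by exact_mod_cast hm
  nlinarith [h1]

lemma sum_klogk_ge (m : ℕ) (hm : 1 ≤ m) :
    1/2 * (m:ℝ)^2 * Real.log m - 3/2 * (m:ℝ)^2
      ≤ ∑ k ∈ range m, (k:ℝ) * Real.log k := by
  have hm1 : (1:ℝ) ≤ m := by exact_mod_cast hm
  have h1 : ∑ k ∈ range m, ((k:ℝ) * Real.log m - m + k)
      ≤ ∑ k ∈ range m, (k:ℝ) * Real.log k := by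
    apply Finset.sum_le_sum
    intro k hk
    rcases Nat.eq_zero_or_pos k with h0 | hk1
    · simp [h0]
    · have hk0 : (0:ℝ) < k := by exact_mod_cast hk1
      have hm0 : (0:ℝ) < m := by linarith
      have hdiv : Real.log ((m:ℝ)/k) ≤ (m:ℝ)/k - 1 :=
        Real.log_le_sub_one_of_pos (by positivity)
      rw [Real.log_div hm0.ne' hk0.ne'] at hdiv
      have h6 : (k:ℝ) * (Real.log m - Real.log k) ≤ (m:ℝ) - k := by
        calc (k:ℝ) * (Real.log m - Real.log k) ≤ (k:ℝ) * ((m:ℝ)/k - 1) :=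
              mul_le_mul_of_nonneg_left hdiv hk0.le
          _ = (m:ℝ) - k := by field_simp
      have h7 : (k:ℝ) * (Real.log m - Real.log k)
          = (k:ℝ) * Real.log m - (k:ℝ) * Real.log k := by ring
      linarith
  have h2 : ∑ k ∈ range m, ((k:ℝ) * Real.log m - m + k)
      = (m * (m-1) / 2) * Real.log m - m * m + m * (m-1) / 2 := by
    rw [Finset.sum_add_distrib, Finset.sum_sub_distrib, ← Finset.sum_mul, sum_range_cast]
    simp only [Finset.sum_const, Finset.card_range, nsmul_eq_mul]
  have hlogm : 0 ≤ Real.log m := Real.log_nonneg hm1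
  have hlogub : Real.log m ≤ (m:ℝ) - 1 := Real.log_le_sub_one_of_pos (by linarith)
  rw [h2] at h1
  nlinarith

lemma tsq_le {r : ℝ} (hr : 0 < r) {n m : ℕ} (hnm : n < m) :
    (r^2)^(m-n) * (n.factorial : ℝ) / (m.factorial : ℝ)
      ≤ r^2 * Real.exp (r^2) / m := by
  set c := r^2 with hcdef
  have hc : 0 < c := by positivity
  set j := m - 1 - n with hj
  have hmn : m - n = j + 1 := by omega
  have hm0 : 0 < m := by omega
  have hfac : (m.factorial : ℝ) = (m:ℝ) * ((m-1).factorial : ℝ) := by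
    rw [← Nat.mul_factorial_pred hm0.ne']; push_cast; ring
  have hdvd : n.factorial * j.factorial ≤ (m-1).factorial := by
    have h := Nat.factorial_mul_factorial_dvd_factorial_add n j
    have hnj : n + j = m - 1 := by omega
    rw [hnj] at h
    exact Nat.le_of_dvd (Nat.factorial_pos _) h
  have h1 : (n.factorial : ℝ) / ((m-1).factorial : ℝ) ≤ 1 / (j.factorial : ℝ) := by
    rw [div_le_div_iff₀ (by positivity) (by positivity), one_mul]
    calc (n.factorial : ℝ) * (j.factorial : ℝ)
        = ((n.factorial * j.factorial : ℕ) : ℝ) := by push_cast; ring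
      _ ≤ ((m-1).factorial : ℝ) := by exact_mod_cast hdvd
  have h2 : c^j * ((n.factorial:ℝ)/((m-1).factorial:ℝ)) ≤ Real.exp c := by
    calc c^j * ((n.factorial:ℝ)/((m-1).factorial:ℝ))
        ≤ c^j * (1 / (j.factorial : ℝ)) :=
          mul_le_mul_of_nonneg_left h1 (by positivity)
      _ = c^j / (j.factorial : ℝ) := by ring
      _ ≤ Real.exp c := Real.pow_div_factorial_le_exp c hc.le j
  have heq : c^(m-n) * (n.factorial:ℝ) / (m.factorial:ℝ)
      = (c/m) * (c^j * ((n.factorial:ℝ)/((m-1).factorial:ℝ))) := by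
    rw [hmn, hfac, pow_succ]
    have h1' : ((m-1).factorial : ℝ) ≠ 0 := by positivity
    have hm' : (m:ℝ) ≠ 0 := by positivity
    field_simp
  rw [heq]
  calc (c/m) * (c^j * ((n.factorial:ℝ)/((m-1).factorial:ℝ)))
      ≤ (c/m) * Real.exp c := mul_le_mul_of_nonneg_left h2 (by positivity)
    _ = c * Real.exp c / m := by ring

lemma part2 (r : ℝ) (hr : 0 < r) (m : ℕ) (hm : 1 ≤ m) :
    |Real.log (∏ n ∈ Finset.range m,
          r ^ (2 * (m - n)) * (n.factorial : ℝ) / (2 * m.factorial))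
        + (1 / 2) * (m : ℝ) ^ 2 * Real.log m| ≤ (2 * |Real.log r| + 4) * (m : ℝ) ^ 2 := by
  have hm1 : (1:ℝ) ≤ m := by exact_mod_cast hm
  have hne : ∀ n ∈ range m,
      r ^ (2 * (m - n)) * (n.factorial : ℝ) / (2 * m.factorial) ≠ 0 := by
    intro n _
    have h1 : (0:ℝ) < n.factorial := by exact_mod_cast Nat.factorial_pos n
    have h2 : (0:ℝ) < m.factorial := by exact_mod_cast Nat.factorial_pos m
    positivity
  have hterm : ∀ n ∈ range m,
      Real.log (r ^ (2 * (m - n)) * (n.factorial : ℝ) / (2 * m.factorial))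
        = (2*(m-n) : ℕ) * Real.log r + Real.log (n.factorial:ℝ)
          - (Real.log 2 + Real.log (m.factorial:ℝ)) := by
    intro n _
    have h1 : (0:ℝ) < n.factorial := by exact_mod_cast Nat.factorial_pos n
    have h2 : (0:ℝ) < m.factorial := by exact_mod_cast Nat.factorial_pos m
    rw [Real.log_div (by positivity) (by positivity),
      Real.log_mul (by positivity) h1.ne',
      Real.log_mul (by norm_num) h2.ne', Real.log_pow]
  rw [Real.log_prod hne, Finset.sum_congr rfl hterm, Finset.sum_sub_distrib,
    Finset.sum_add_distrib, Finset.sum_const, card_range, nsmul_eq_mul]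
  set A := ∑ n ∈ range m, ((2*(m-n) : ℕ) : ℝ) * Real.log r with hA
  set S := ∑ k ∈ range m, (k:ℝ) * Real.log k with hS
  have hid := sum_log_fact m
  have hSle := sum_klogk_le m hm
  have hSge := sum_klogk_ge m hm
  have hAbd : |A| ≤ 2 * |Real.log r| * (m:ℝ)^2 := by
    calc |A| ≤ ∑ n ∈ range m, |((2*(m-n) : ℕ) : ℝ) * Real.log r| :=
          Finset.abs_sum_le_sum_abs _ _
      _ ≤ ∑ n ∈ range m, 2 * (m:ℝ) * |Real.log r| := by
          apply Finset.sum_le_sum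
          intro n _
          rw [abs_mul, abs_of_nonneg (by positivity : (0:ℝ) ≤ ((2*(m-n):ℕ):ℝ))]
          apply mul_le_mul_of_nonneg_right _ (abs_nonneg _)
          have : (2*(m-n) : ℕ) ≤ 2 * m := by omega
          calc ((2*(m-n):ℕ):ℝ) ≤ ((2*m : ℕ):ℝ) := by exact_mod_cast this
            _ = 2 * (m:ℝ) := by push_cast; ring
      _ = 2 * |Real.log r| * (m:ℝ)^2 := by
          rw [Finset.sum_const, card_range, nsmul_eq_mul]; ring
  have hlog2 : Real.log 2 ≤ 1 := by
    have := Real.log_le_sub_one_of_pos (by norm_num : (0:ℝ) < 2); linarith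
  have hlog2' : 0 ≤ Real.log 2 := Real.log_nonneg (by norm_num)
  have hlogm : 0 ≤ Real.log m := Real.log_nonneg hm1
  have hlogmub : Real.log m ≤ (m:ℝ) - 1 := Real.log_le_sub_one_of_pos (by linarith)
  have habs := abs_le.1 hAbd
  have hrabs : 0 ≤ |Real.log r| := abs_nonneg _
  rw [abs_le]
  constructor <;> nlinarith [hid, hSle, hSge, habs.1, habs.2]

theorem stmt19 {Ω : Type*} [MeasurableSpace Ω] (P : Measure Ω) [IsProbabilityMeasure P]
    (a : ℕ → Ω → ℂ) (ha : ∀ n, Measurable (a n))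
    (hlaw : ∀ n, Measure.map (a n) P = stdComplexGaussian)
    (hindep : iIndepFun a P)
    (r : ℝ) (hr : 0 < r) :
    ∃ C : ℝ, 0 < C ∧ ∃ M : ℕ, ∀ m : ℕ, M ≤ m →
      (ENNReal.ofReal (∏ n ∈ Finset.range m,
            r ^ (2 * (m - n)) * (n.factorial : ℝ) / (2 * m.factorial))
          ≤ P {ω | ∀ n < m, ‖a n ω‖
              ≤ r ^ (m - n) * Real.sqrt (n.factorial) / Real.sqrt (m.factorial)}) ∧
      |Real.log (∏ n ∈ Finset.range m,
            r ^ (2 * (m - n)) * (n.factorial : ℝ) / (2 * m.factorial))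
          + (1 / 2) * (m : ℝ) ^ 2 * Real.log m| ≤ C * (m : ℝ) ^ 2 := by
  refine ⟨2 * |Real.log r| + 4, by positivity, max 1 ⌈2 * r^2 * Real.exp (r^2)⌉₊, ?_⟩
  intro m hM
  have hm1 : 1 ≤ m := le_trans (le_max_left _ _) hM
  have hm1' : (1:ℝ) ≤ m := by exact_mod_cast hm1
  constructor
  · -- probability lower bound
    set t : ℕ → ℝ := fun n =>
      r ^ (m - n) * Real.sqrt (n.factorial) / Real.sqrt (m.factorial) with htdef
    have ht0 : ∀ n, 0 ≤ t n := by
      intro n; simp only [htdef]; positivity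
    have htsq : ∀ n, (t n) ^ 2
        = r ^ (2 * (m - n)) * (n.factorial : ℝ) / (m.factorial : ℝ) := by
      intro n
      have h1 : (0:ℝ) ≤ (n.factorial : ℝ) := by positivity
      have h2 : (0:ℝ) ≤ (m.factorial : ℝ) := by positivity
      simp only [htdef]
      rw [div_pow, mul_pow, Real.sq_sqrt h1, Real.sq_sqrt h2, ← pow_mul, mul_comm (m - n) 2]
    have htsq_half : ∀ n < m, (t n) ^ 2 ≤ 1 / 2 := by
      intro n hn
      rw [htsq n]
      have hb := tsq_le hr hn
      have hpow : (r^2)^(m-n) = r ^ (2 * (m - n)) := by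
        rw [← pow_mul]
      rw [hpow] at hb
      have hMm : 2 * r^2 * Real.exp (r^2) ≤ (m:ℝ) := by
        have h1 : (⌈2 * r^2 * Real.exp (r^2)⌉₊ : ℝ) ≤ m := by
          exact_mod_cast le_trans (le_max_right 1 _) hM
        exact le_trans (Nat.le_ceil _) h1
      have hm0 : (0:ℝ) < m := by linarith
      calc r ^ (2 * (m - n)) * (n.factorial : ℝ) / (m.factorial : ℝ)
          ≤ r^2 * Real.exp (r^2) / m := hb
        _ ≤ 1 / 2 := by
            rw [div_le_div_iff₀ hm0 (by norm_num)]
            nlinarith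
    -- events
    set B : ℕ → Set ℂ := fun n => {z : ℂ | ‖z‖ ≤ t n} with hBdef
    have hBmeas : ∀ n, MeasurableSet (B n) := by
      intro n
      have : B n = Metric.closedBall 0 (t n) := by
        ext z; simp [hBdef, Metric.mem_closedBall, Complex.dist_eq]
      rw [this]; exact measurableSet_closedBall
    have hset : {ω | ∀ n < m, ‖a n ω‖
        ≤ r ^ (m - n) * Real.sqrt (n.factorial) / Real.sqrt (m.factorial)}
        = ⋂ n ∈ Finset.range m, (a n) ⁻¹' (B n) := by
      ext ω
      simp only [Set.mem_setOf_eq, Set.mem_iInter, Set.mem_preimage, hBdef,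
        Finset.mem_range, htdef]
    have hprod : P (⋂ n ∈ Finset.range m, (a n) ⁻¹' (B n))
        = ∏ n ∈ Finset.range m, P ((a n) ⁻¹' (B n)) :=
      hindep.meas_biInter (fun n _ => ⟨B n, hBmeas n, rfl⟩)
    have hmarg : ∀ n, P ((a n) ⁻¹' (B n)) = stdComplexGaussian (B n) := by
      intro n
      rw [← hlaw n, Measure.map_apply (ha n) (hBmeas n)]
    rw [hset, hprod]
    calc ENNReal.ofReal (∏ n ∈ Finset.range m,
            r ^ (2 * (m - n)) * (n.factorial : ℝ) / (2 * m.factorial))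
        = ∏ n ∈ Finset.range m, ENNReal.ofReal
            (r ^ (2 * (m - n)) * (n.factorial : ℝ) / (2 * m.factorial)) := by
          apply ENNReal.ofReal_prod_of_nonneg
          intro n _
          positivity
      _ ≤ ∏ n ∈ Finset.range m, P ((a n) ⁻¹' (B n)) := by
          apply Finset.prod_le_prod'
          intro n hn
          have hn' : n < m := Finset.mem_range.1 hn
          have heq : r ^ (2 * (m - n)) * (n.factorial : ℝ) / (2 * m.factorial)
              = (t n) ^ 2 / 2 := by
            rw [htsq n]; ring
          rw [heq, hmarg n]
          exact gauss_lb (ht0 n) (htsq_half n hn')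
  · exact part2 r hr m hm1
end
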